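/- Let f : ℝ^{n×m} → ℝ be differentiable with ∇f Lipschitz continuous with modulus L_f (Frobenius norm), λ > 0, μ ≥ 0. Let U^k, Ũ^k ∈ ℝ^{n×r} and V^k, Ṽ^k ∈ ℝ^{m×r}. Set τ₁ = L_f‖V^k‖² and γ₁ > τ₁, and let U^{k+1} globally minimize U ↦ ⟨∇f(Ũ^k(V^k)ᵀ)V^k, U⟩ + (γ₁/2)‖U − Ũ^k‖_F² + (μ/2)‖U‖_F² + λ‖U‖_{2,0}. Set τ₂ = L_f‖U^{k+1}‖² and γ₂ > τ₂, and let V^{k+1} globally minimize V ↦ ⟨(∇f(U^{k+1}(Ṽ^k)ᵀ))ᵀU^{k+1}, V⟩ + (γ₂/2)‖V − Ṽ^k‖_F² + (μ/2)‖V‖_F² + λ‖V‖_{2,0}. Then Φ_{λ,μ}(U^{k+1}, V^{k+1}) ≤ Φ_{λ,μ}(U^k, V^k) + ((γ₁ + τ₁)/2)‖U^k − Ũ^k‖_F² + ((γ₂ + τ₂)/2)‖V^k − Ṽ^k‖_F² − ((γ₁ − τ₁)/2)‖U^{k+1} − Ũ^k‖_F² − ((γ₂ − τ₂)/2)‖V^{k+1}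 − Ṽ^k‖_F². -/

import Mathlib

open Filter Topology Matrix

attribute [local instance] Matrix.frobeniusSeminormedAddCommGroup
  Matrix.frobeniusNormedAddCommGroup Matrix.frobeniusNormedSpace

/-- The Frobenius (trace) inner product `⟨A,B⟩ = trace(AᵀB) = ∑ᵢⱼ Aᵢⱼ Bᵢⱼ` on matrices. -/
noncomputable def frobInner {α β : Type*} [Fintype α] [Fintype β] (A B : Matrix α β ℝ) : ℝ :=
  ∑ i, ∑ j, A i j * B i j

/-- The Frobenius norm of a matrix. -/
noncomputable def frobNorm {α β : Type*} [Fintype α] [Fintype β] (A : Matrix α β ℝ) : ℝ :=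
  Real.sqrt (frobInner A A)

/-- The column `ℓ_{2,0}`-norm: the number of nonzero columns. -/
noncomputable def l20 {α β : Type*} [Fintype α] [Fintype β] (A : Matrix α β ℝ) : ℕ :=
  {j : β | (fun i => A i j) ≠ 0}.ncard

/-- The spectral norm of a matrix. -/
noncomputable def specNorm {m r : ℕ} (V : Matrix (Fin m) (Fin r) ℝ) : ℝ :=
  ‖LinearMap.toContinuousLinearMap (Matrix.toEuclideanLin V)‖

/-- `Φ_{λ,μ}(U,V) = f(UVᵀ) + (μ/2)(‖U‖_F² + ‖V‖_F²) + λ(‖U‖_{2,0} + ‖V‖_{2,0})`. -/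
noncomputable def Phi {n m r : ℕ} (f : Matrix (Fin n) (Fin m) ℝ → ℝ) (lam mu : ℝ)
    (U : Matrix (Fin n) (Fin r) ℝ) (V : Matrix (Fin m) (Fin r) ℝ) : ℝ :=
  f (U * Vᵀ) + mu / 2 * (frobInner U U + frobInner V V) + lam * ((l20 U : ℝ) + (l20 V : ℝ))


lemma frobInner_self_eq {α β : Type*} [Fintype α] [Fintype β] (A : Matrix α β ℝ) :
    frobInner A A = ‖A‖ ^ 2 := by
  rw [Matrix.frobenius_norm_def, ← Real.sqrt_eq_rpow, Real.sq_sqrt (by positivity)]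
  unfold frobInner; simp [sq]

lemma frobInner_prod {α β : Type*} [Fintype α] [Fintype β] (A B : Matrix α β ℝ) :
    frobInner A B = ∑ p : α × β, A p.1 p.2 * B p.1 p.2 := by
  rw [Fintype.sum_prod_type]; rfl

lemma abs_frobInner_le {α β : Type*} [Fintype α] [Fintype β] (A B : Matrix α β ℝ) :
    |frobInner A B| ≤ ‖A‖ * ‖B‖ := by
  have hcs := Finset.sum_mul_sq_le_sq_mul_sq Finset.univ (fun p : α × β => A p.1 p.2)
    (fun p : α × β => B p.1 p.2)
  have hA : ∑ p : α × β, A p.1 p.2 ^ 2 = ‖A‖ ^ 2 := by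
    rw [← frobInner_self_eq, frobInner_prod]; simp [sq]
  have hB : ∑ p : α × β, B p.1 p.2 ^ 2 = ‖B‖ ^ 2 := by
    rw [← frobInner_self_eq, frobInner_prod]; simp [sq]
  rw [frobInner_prod]
  calc |∑ p : α × β, A p.1 p.2 * B p.1 p.2|
      = Real.sqrt ((∑ p : α × β, A p.1 p.2 * B p.1 p.2) ^ 2) := (Real.sqrt_sq_eq_abs _).symm
    _ ≤ Real.sqrt ((‖A‖ * ‖B‖) ^ 2) := by
        apply Real.sqrt_le_sqrt
        rw [mul_pow]
        calc _ ≤ _ := hcs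
        _ = ‖A‖^2 * ‖B‖^2 := by rw [hA, hB]
    _ = ‖A‖ * ‖B‖ := Real.sqrt_sq (by positivity)


lemma frobInner_sub_right {α β : Type*} [Fintype α] [Fintype β] (A B C : Matrix α β ℝ) :
    frobInner A (B - C) = frobInner A B - frobInner A C := by
  unfold frobInner; simp [Matrix.sub_apply, mul_sub, Finset.sum_sub_distrib]

lemma frobInner_mulVT {n m r : ℕ} (A : Matrix (Fin n) (Fin m) ℝ)
    (U : Matrix (Fin n) (Fin r) ℝ) (V : Matrix (Fin m) (Fin r) ℝ) :
    frobInner A (U * Vᵀ) = frobInner (A * V) U := by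
  unfold frobInner
  simp only [Matrix.mul_apply, Matrix.transpose_apply, Finset.mul_sum, Finset.sum_mul]
  congr 1; ext i
  rw [Finset.sum_comm]
  congr 1; ext k; congr 1; ext j; ring

lemma frobInner_transpose {α β : Type*} [Fintype α] [Fintype β] (A B : Matrix α β ℝ) :
    frobInner Aᵀ Bᵀ = frobInner A B := by
  unfold frobInner; rw [Finset.sum_comm]; rfl

lemma specNorm_nonneg {m r : ℕ} (V : Matrix (Fin m) (Fin r) ℝ) : 0 ≤ specNorm V :=
  norm_nonneg _


lemma frob_mul_transpose_le' {n m r : ℕ} (A : Matrix (Fin n) (Fin r) ℝ)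
    (V : Matrix (Fin m) (Fin r) ℝ) :
    ‖A * Vᵀ‖ ≤ ‖A‖ * specNorm V := by
  set T := LinearMap.toContinuousLinearMap (Matrix.toEuclideanLin V) with hT
  have key : ∀ i, ∑ j, ((A * Vᵀ) i j) ^ 2 ≤ specNorm V ^ 2 * ∑ k, (A i k) ^ 2 := by
    intro i
    set x : EuclideanSpace ℝ (Fin r) := (WithLp.equiv 2 (Fin r → ℝ)).symm (A i) with hx
    have hTx : T x = (WithLp.equiv 2 (Fin m → ℝ)).symm (V *ᵥ (A i)) := by
      simp [hT, hx, Matrix.toEuclideanLin_apply_piLp_toLp]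
    have hmv : ∀ j, (A * Vᵀ) i j = (V *ᵥ (A i)) j := by
      intro j
      simp [Matrix.mul_apply, Matrix.mulVec, dotProduct, mul_comm]
    have hnTx : ‖T x‖ ^ 2 = ∑ j, ((A * Vᵀ) i j) ^ 2 := by
      rw [EuclideanSpace.norm_eq, Real.sq_sqrt (by positivity)]
      simp_rw [hTx, hmv]
      congr 1; ext j; simp [PiLp.toLp_apply, sq_abs]
    have hnx : ‖x‖ ^ 2 = ∑ k, (A i k) ^ 2 := by
      rw [EuclideanSpace.norm_eq, Real.sq_sqrt (by positivity)]
      congr 1; ext k; simp [hx, PiLp.toLp_apply, sq_abs]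
    have hb := T.le_opNorm x
    have := mul_self_le_mul_self (norm_nonneg (T x)) hb
    calc ∑ j, ((A * Vᵀ) i j) ^ 2 = ‖T x‖ ^ 2 := hnTx.symm
      _ ≤ (‖T‖ * ‖x‖) ^ 2 := by rw [sq, sq]; exact this
      _ = specNorm V ^ 2 * ∑ k, (A i k) ^ 2 := by
          rw [mul_pow, hnx]; rfl
  have h2 : ‖A * Vᵀ‖ ^ 2 ≤ (‖A‖ * specNorm V) ^ 2 := by
    have hA : ‖A‖ ^ 2 = ∑ i, ∑ k, (A i k) ^ 2 := by
      rw [Matrix.frobenius_norm_def, ← Real.sqrt_eq_rpow, Real.sq_sqrt (by positivity)]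
      simp [sq_abs]
    have hAV : ‖A * Vᵀ‖ ^ 2 = ∑ i, ∑ j, ((A * Vᵀ) i j) ^ 2 := by
      rw [Matrix.frobenius_norm_def, ← Real.sqrt_eq_rpow, Real.sq_sqrt (by positivity)]
      simp [sq_abs]
    rw [hAV, mul_pow, hA, Finset.sum_mul]
    apply Finset.sum_le_sum
    intro i _
    calc ∑ j, ((A * Vᵀ) i j) ^ 2 ≤ specNorm V ^ 2 * ∑ k, (A i k) ^ 2 := key i
      _ = (∑ k, A i k ^ 2) * specNorm V ^ 2 := by ring
  calc ‖A * Vᵀ‖ = Real.sqrt (‖A * Vᵀ‖ ^ 2) := (Real.sqrt_sq (norm_nonneg _)).symm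
    _ ≤ Real.sqrt ((‖A‖ * specNorm V) ^ 2) := Real.sqrt_le_sqrt h2
    _ = ‖A‖ * specNorm V := Real.sqrt_sq (mul_nonneg (norm_nonneg _) (specNorm_nonneg _))

lemma frobNorm_eq {α β : Type*} [Fintype α] [Fintype β] (A : Matrix α β ℝ) :
    frobNorm A = ‖A‖ := by
  rw [frobNorm, frobInner_self_eq, Real.sqrt_sq (norm_nonneg _)]

/-- bundled CLM of right multiplication by `Vᵀ` -/
noncomputable def mulVT {n m r : ℕ} (V : Matrix (Fin m) (Fin r) ℝ) :
    Matrix (Fin n) (Fin r) ℝ →L[ℝ] Matrix (Fin n) (Fin m) ℝ :=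
  LinearMap.toContinuousLinearMap
    { toFun := fun W => W * Vᵀ
      map_add' := fun X Y => Matrix.add_mul X Y Vᵀ
      map_smul' := fun c X => Matrix.smul_mul c X Vᵀ }

lemma mulVT_apply {n m r : ℕ} (V : Matrix (Fin m) (Fin r) ℝ)
    (W : Matrix (Fin n) (Fin r) ℝ) : mulVT V W = W * Vᵀ := rfl

lemma frobInner_comm {α β : Type*} [Fintype α] [Fintype β] (A B : Matrix α β ℝ) :
    frobInner A B = frobInner B A := by
  unfold frobInner; simp_rw [mul_comm]

lemma frobInner_sub_left {α β : Type*} [Fintype α] [Fintype β] (A B C : Matrix α β ℝ) :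
    frobInner (A - B) C = frobInner A C - frobInner B C := by
  rw [frobInner_comm, frobInner_sub_right, frobInner_comm, frobInner_comm C]

lemma descent_bound {n m r : ℕ} (f : Matrix (Fin n) (Fin m) ℝ → ℝ)
    (f' : Matrix (Fin n) (Fin m) ℝ → Matrix (Fin n) (Fin m) ℝ) (Lf : ℝ)
    (hdiff : Differentiable ℝ f)
    (hgrad : ∀ X H, fderiv ℝ f X H = frobInner (f' X) H)
    (hlip : ∀ X Y, ‖f' X - f' Y‖ ≤ Lf * ‖X - Y‖)
    (hLf : 0 ≤ Lf)
    (V : Matrix (Fin m) (Fin r) ℝ) (U0 U : Matrix (Fin n) (Fin r) ℝ) :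
    |f (U * Vᵀ) - f (U0 * Vᵀ) - frobInner (f' (U0 * Vᵀ) * V) (U - U0)|
      ≤ Lf * specNorm V ^ 2 / 2 * ‖U - U0‖ ^ 2 := by
  set D := U - U0 with hD
  set τ := Lf * specNorm V ^ 2 with hτ
  have hsV := specNorm_nonneg V
  have hτ0 : 0 ≤ τ := by positivity
  set φ : ℝ → ℝ := fun t => f ((U0 + t • D) * Vᵀ) with hφdef
  set φ' : ℝ → ℝ := fun t => frobInner (f' ((U0 + t • D) * Vᵀ) * V) D with hφ'def
  have hφd : ∀ t, HasDerivAt φ (φ' t) t := by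
    intro t
    have hc : HasDerivAt (fun t : ℝ => U0 + t • D) D t := by
      have := ((hasDerivAt_id' t).smul_const D).const_add U0
      rwa [one_smul] at this
    have hL : HasFDerivAt (fun W : Matrix (Fin n) (Fin r) ℝ => W * Vᵀ)
        (mulVT (n := n) V) (U0 + t • D) := (mulVT (n := n) V).hasFDerivAt
    have hf : HasFDerivAt f (fderiv ℝ f ((U0 + t • D) * Vᵀ)) ((U0 + t • D) * Vᵀ) :=
      (hdiff _).hasFDerivAt
    have h2 : fderiv ℝ f ((U0 + t • D) * Vᵀ) (mulVT (n := n) V D) = φ' t := by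
      rw [mulVT_apply, hgrad, frobInner_mulVT]
    rw [← h2]
    have := (hf.comp (U0 + t • D) hL).comp_hasDerivAt t hc
    exact this
  have hDV : ‖D * Vᵀ‖ ≤ ‖D‖ * specNorm V := frob_mul_transpose_le' D V
  have hkey : ∀ t : ℝ, 0 ≤ t → |φ' t - φ' 0| ≤ τ * t * ‖D‖ ^ 2 := by
    intro t ht
    set Δ := f' ((U0 + t • D) * Vᵀ) - f' ((U0 + (0:ℝ) • D) * Vᵀ) with hΔ
    have h1 : φ' t - φ' 0 = frobInner Δ (D * Vᵀ) := by
      simp only [hφ'def, ← frobInner_mulVT, hΔ, frobInner_sub_left]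
    have h2 : |φ' t - φ' 0| ≤ ‖Δ‖ * ‖D * Vᵀ‖ := by
      rw [h1]; exact abs_frobInner_le _ _
    have h3 : ‖Δ‖ ≤ Lf * (t * (‖D‖ * specNorm V)) := by
      calc ‖Δ‖ ≤ Lf * ‖(U0 + t • D) * Vᵀ - (U0 + (0:ℝ) • D) * Vᵀ‖ := hlip _ _
        _ = Lf * (t * ‖D * Vᵀ‖) := by
            congr 1
            rw [show (U0 + t • D) * Vᵀ - (U0 + (0:ℝ) • D) * Vᵀ = t • (D * Vᵀ) by
              rw [Matrix.add_mul, Matrix.add_mul, Matrix.smul_mul, Matrix.smul_mul]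
              simp [smul_smul]]
            rw [norm_smul]
            simp [abs_of_nonneg ht]
        _ ≤ Lf * (t * (‖D‖ * specNorm V)) := by
            apply mul_le_mul_of_nonneg_left _ hLf
            exact mul_le_mul_of_nonneg_left hDV ht
    calc |φ' t - φ' 0| ≤ ‖Δ‖ * ‖D * Vᵀ‖ := h2
      _ ≤ (Lf * (t * (‖D‖ * specNorm V))) * (‖D‖ * specNorm V) := by
          apply mul_le_mul h3 hDV (norm_nonneg _)
          positivity
      _ = τ * t * ‖D‖ ^ 2 := by rw [hτ]; ring
  -- ψ upper: φ 1 ≤ φ 0 + φ' 0 + τ/2 ‖D‖²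
  have hIcc : Convex ℝ (Set.Icc (0:ℝ) 1) := convex_Icc 0 1
  have hint : interior (Set.Icc (0:ℝ) 1) = Set.Ioo 0 1 := interior_Icc
  set c : ℝ := τ / 2 * ‖D‖ ^ 2 with hc
  have hψd : ∀ s : ℝ, HasDerivAt (fun t => φ t - t * φ' 0 - c * t ^ 2)
      (φ' s - φ' 0 - (c * (2 * s))) s := by
    intro s
    have h1 : HasDerivAt (fun t : ℝ => t * φ' 0) (φ' 0) s := by
      simpa using (hasDerivAt_id s).mul_const (φ' 0)
    have h2 : HasDerivAt (fun t : ℝ => c * t ^ 2) (c * (2 * s)) s := by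
      have := (hasDerivAt_pow 2 s).const_mul c
      simpa using this
    exact ((hφd s).sub h1).sub h2
  have hχd : ∀ s : ℝ, HasDerivAt (fun t => φ t - t * φ' 0 + c * t ^ 2)
      (φ' s - φ' 0 + (c * (2 * s))) s := by
    intro s
    have h1 : HasDerivAt (fun t : ℝ => t * φ' 0) (φ' 0) s := by
      simpa using (hasDerivAt_id s).mul_const (φ' 0)
    have h2 : HasDerivAt (fun t : ℝ => c * t ^ 2) (c * (2 * s)) s := by
      have := (hasDerivAt_pow 2 s).const_mul c
      simpa using this
    exact ((hφd s).sub h1).add h2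
  have hub : φ 1 - 1 * φ' 0 - c * 1 ^ 2 ≤ φ 0 - 0 * φ' 0 - c * 0 ^ 2 := by
    have ha : AntitoneOn (fun t => φ t - t * φ' 0 - c * t ^ 2) (Set.Icc 0 1) := by
      apply antitoneOn_of_deriv_nonpos hIcc
      · exact fun x _ => ((hψd x).continuousAt).continuousWithinAt
      · intro x _
        exact ((hψd x).differentiableAt).differentiableWithinAt
      · intro x hx
        rw [hint] at hx
        rw [(hψd x).deriv]
        have := hkey x (le_of_lt hx.1)
        have h3 : φ' x - φ' 0 ≤ τ * x * ‖D‖ ^ 2 := (abs_le.mp this).2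
        have : c * (2 * x) = τ * x * ‖D‖ ^ 2 := by rw [hc]; ring
        linarith
    exact ha (Set.mem_Icc.mpr ⟨le_refl 0, zero_le_one⟩)
      (Set.mem_Icc.mpr ⟨zero_le_one, le_refl 1⟩) zero_le_one
  have hlb : φ 0 - 0 * φ' 0 + c * 0 ^ 2 ≤ φ 1 - 1 * φ' 0 + c * 1 ^ 2 := by
    have ha : MonotoneOn (fun t => φ t - t * φ' 0 + c * t ^ 2) (Set.Icc 0 1) := by
      apply monotoneOn_of_deriv_nonneg hIcc
      · exact fun x _ => ((hχd x).continuousAt).continuousWithinAt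
      · intro x _
        exact ((hχd x).differentiableAt).differentiableWithinAt
      · intro x hx
        rw [hint] at hx
        rw [(hχd x).deriv]
        have := hkey x (le_of_lt hx.1)
        have h3 : -(τ * x * ‖D‖ ^ 2) ≤ φ' x - φ' 0 := (abs_le.mp this).1
        have : c * (2 * x) = τ * x * ‖D‖ ^ 2 := by rw [hc]; ring
        linarith
    exact ha (Set.mem_Icc.mpr ⟨le_refl 0, zero_le_one⟩)
      (Set.mem_Icc.mpr ⟨zero_le_one, le_refl 1⟩) zero_le_one
  have hφ1 : φ 1 = f (U * Vᵀ) := by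
    rw [hφdef]; norm_num [hD]
  have hφ0 : φ 0 = f (U0 * Vᵀ) := by
    rw [hφdef]; norm_num
  have hφ'0 : φ' 0 = frobInner (f' (U0 * Vᵀ) * V) (U - U0) := by
    rw [hφ'def]; norm_num [hD]
  rw [abs_le]
  constructor <;> nlinarith [hub, hlb, hφ1, hφ0, hφ'0]

lemma frobInner_zero_left {α β : Type*} [Fintype α] [Fintype β] (B : Matrix α β ℝ) :
    frobInner 0 B = 0 := by unfold frobInner; simp

lemma descent_bound' {n m r : ℕ} (f : Matrix (Fin n) (Fin m) ℝ → ℝ)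
    (f' : Matrix (Fin n) (Fin m) ℝ → Matrix (Fin n) (Fin m) ℝ) (Lf : ℝ)
    (hdiff : Differentiable ℝ f)
    (hgrad : ∀ X H, fderiv ℝ f X H = frobInner (f' X) H)
    (hlip : ∀ X Y, ‖f' X - f' Y‖ ≤ Lf * ‖X - Y‖)
    (V : Matrix (Fin m) (Fin r) ℝ) (U0 U : Matrix (Fin n) (Fin r) ℝ) :
    |f (U * Vᵀ) - f (U0 * Vᵀ) - frobInner (f' (U0 * Vᵀ) * V) (U - U0)|
      ≤ Lf * specNorm V ^ 2 / 2 * ‖U - U0‖ ^ 2 := by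
  rcases Nat.eq_zero_or_pos n with hn | hn
  · subst hn
    have hU : U = U0 := Subsingleton.elim _ _
    subst hU
    simp only [sub_self]
    have h1 : frobInner (f' (U * Vᵀ) * V) (0 : Matrix (Fin 0) (Fin r) ℝ) = 0 := by
      unfold frobInner; simp
    rw [h1, norm_zero]
    norm_num
  rcases Nat.eq_zero_or_pos m with hm | hm
  · subst hm
    have hf : U * Vᵀ = U0 * Vᵀ := Subsingleton.elim _ _
    have hz : f' (U0 * Vᵀ) * V = 0 := by
      ext i j; simp [Matrix.mul_apply]
    have hs : specNorm V = 0 := by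
      have : LinearMap.toContinuousLinearMap (Matrix.toEuclideanLin V) = 0 := by
        apply ContinuousLinearMap.ext
        intro x
        exact Subsingleton.elim _ _
      rw [specNorm, this, norm_zero]
    rw [hf, hz, hs, frobInner_zero_left]
    norm_num
  · -- nontrivial case: Lf ≥ 0
    have hLf : 0 ≤ Lf := by
      set Y : Matrix (Fin n) (Fin m) ℝ := fun _ _ => 1 with hY
      have hY0 : Y ≠ 0 := by
        intro h
        have := congrFun (congrFun h ⟨0, hn⟩) ⟨0, hm⟩
        simp [hY] at this
      have h1 : (0:ℝ) < ‖(0 : Matrix (Fin n) (Fin m) ℝ) - Y‖ := by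
        rw [zero_sub, norm_neg]
        exact norm_pos_iff.mpr hY0
      have h2 := (norm_nonneg (f' 0 - f' Y)).trans (hlip 0 Y)
      nlinarith
    exact descent_bound f f' Lf hdiff hgrad hlip hLf V U0 U

/-- transpose as CLM -/
noncomputable def transposeCLM (n m : ℕ) :
    Matrix (Fin n) (Fin m) ℝ →L[ℝ] Matrix (Fin m) (Fin n) ℝ :=
  LinearMap.toContinuousLinearMap
    { toFun := fun W => Wᵀ
      map_add' := fun X Y => Matrix.transpose_add X Y
      map_smul' := fun c X => Matrix.transpose_smul c X }

lemma transposeCLM_apply {n m : ℕ} (W : Matrix (Fin n) (Fin m) ℝ) :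
    transposeCLM n m W = Wᵀ := rfl

lemma descent_bound_right {n m r : ℕ} (f : Matrix (Fin n) (Fin m) ℝ → ℝ)
    (f' : Matrix (Fin n) (Fin m) ℝ → Matrix (Fin n) (Fin m) ℝ) (Lf : ℝ)
    (hdiff : Differentiable ℝ f)
    (hgrad : ∀ X H, fderiv ℝ f X H = frobInner (f' X) H)
    (hlip : ∀ X Y, ‖f' X - f' Y‖ ≤ Lf * ‖X - Y‖)
    (U : Matrix (Fin n) (Fin r) ℝ) (V0 V : Matrix (Fin m) (Fin r) ℝ) :
    |f (U * Vᵀ) - f (U * V0ᵀ) - frobInner ((f' (U * V0ᵀ))ᵀ * U) (V - V0)|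
      ≤ Lf * specNorm U ^ 2 / 2 * ‖V - V0‖ ^ 2 := by
  set g : Matrix (Fin m) (Fin n) ℝ → ℝ := fun Y => f Yᵀ with hg
  set g' : Matrix (Fin m) (Fin n) ℝ → Matrix (Fin m) (Fin n) ℝ := fun Y => (f' Yᵀ)ᵀ with hg'
  have hgdiff : Differentiable ℝ g :=
    hdiff.comp (transposeCLM m n).differentiable
  have hgg : ∀ Y H, fderiv ℝ g Y H = frobInner (g' Y) H := by
    intro Y H
    have hc : HasFDerivAt g ((fderiv ℝ f Yᵀ).comp (transposeCLM m n)) Y :=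
      ((hdiff Yᵀ).hasFDerivAt).comp Y (transposeCLM m n).hasFDerivAt
    rw [hc.fderiv]
    show fderiv ℝ f Yᵀ (transposeCLM m n H) = _
    rw [transposeCLM_apply, hgrad]
    rw [hg']
    calc frobInner (f' Yᵀ) Hᵀ = frobInner ((f' Yᵀ)ᵀ)ᵀ Hᵀ := by rw [Matrix.transpose_transpose]
      _ = frobInner (f' Yᵀ)ᵀ H := frobInner_transpose _ _
  have hglip : ∀ X Y, ‖g' X - g' Y‖ ≤ Lf * ‖X - Y‖ := by
    intro X Y
    have h1 : g' X - g' Y = (f' Xᵀ - f' Yᵀ)ᵀ := by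
      rw [hg']; simp [Matrix.transpose_sub]
    rw [h1, Matrix.frobenius_norm_transpose]
    calc ‖f' Xᵀ - f' Yᵀ‖ ≤ Lf * ‖Xᵀ - Yᵀ‖ := hlip _ _
      _ = Lf * ‖X - Y‖ := by rw [← Matrix.transpose_sub, Matrix.frobenius_norm_transpose]
  have := descent_bound' g g' Lf hgdiff hgg hglip U V0 V
  have e1 : g (V * Uᵀ) = f (U * Vᵀ) := by
    rw [hg]; simp [Matrix.transpose_mul]
  have e2 : g (V0 * Uᵀ) = f (U * V0ᵀ) := by
    rw [hg]; simp [Matrix.transpose_mul]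
  have e3 : g' (V0 * Uᵀ) = (f' (U * V0ᵀ))ᵀ := by
    rw [hg']; simp [Matrix.transpose_mul]
  rw [e1, e2, e3] at this
  exact this

/-- one full alternating majorization step decreases `Φ_{λ,μ}` up to the
stated proximal correction terms. -/
theorem amm_two_block_descent {n m r : ℕ}
    (f : Matrix (Fin n) (Fin m) ℝ → ℝ) (f' : Matrix (Fin n) (Fin m) ℝ → Matrix (Fin n) (Fin m) ℝ)
    (Lf : ℝ)
    (hdiff : Differentiable ℝ f)
    (hgrad : ∀ X H, fderiv ℝ f X H = frobInner (f' X) H)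
    (hlip : ∀ X Y, frobNorm (f' X - f' Y) ≤ Lf * frobNorm (X - Y))
    (lam mu : ℝ) (hlam : 0 < lam) (hmu : 0 ≤ mu)
    (Uk Utk Uk1 : Matrix (Fin n) (Fin r) ℝ) (Vk Vtk Vk1 : Matrix (Fin m) (Fin r) ℝ)
    (τ1 γ1 : ℝ) (hτ1 : τ1 = Lf * specNorm Vk ^ 2) (hγ1 : γ1 > τ1)
    (hU : ∀ U : Matrix (Fin n) (Fin r) ℝ,
      frobInner (f' (Utk * Vkᵀ) * Vk) Uk1 + γ1 / 2 * frobInner (Uk1 - Utk) (Uk1 - Utk) +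
          mu / 2 * frobInner Uk1 Uk1 + lam * (l20 Uk1 : ℝ) ≤
        frobInner (f' (Utk * Vkᵀ) * Vk) U + γ1 / 2 * frobInner (U - Utk) (U - Utk) +
          mu / 2 * frobInner U U + lam * (l20 U : ℝ))
    (τ2 γ2 : ℝ) (hτ2 : τ2 = Lf * specNorm Uk1 ^ 2) (hγ2 : γ2 > τ2)
    (hV : ∀ V : Matrix (Fin m) (Fin r) ℝ,
      frobInner ((f' (Uk1 * Vtkᵀ))ᵀ * Uk1) Vk1 + γ2 / 2 * frobInner (Vk1 - Vtk) (Vk1 - Vtk) +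
          mu / 2 * frobInner Vk1 Vk1 + lam * (l20 Vk1 : ℝ) ≤
        frobInner ((f' (Uk1 * Vtkᵀ))ᵀ * Uk1) V + γ2 / 2 * frobInner (V - Vtk) (V - Vtk) +
          mu / 2 * frobInner V V + lam * (l20 V : ℝ)) :
    Phi f lam mu Uk1 Vk1 ≤
      Phi f lam mu Uk Vk + (γ1 + τ1) / 2 * frobInner (Uk - Utk) (Uk - Utk) +
        (γ2 + τ2) / 2 * frobInner (Vk - Vtk) (Vk - Vtk) -
        (γ1 - τ1) / 2 * frobInner (Uk1 - Utk) (Uk1 - Utk) -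
        (γ2 - τ2) / 2 * frobInner (Vk1 - Vtk) (Vk1 - Vtk) := by
  
  have hlip' : ∀ X Y, ‖f' X - f' Y‖ ≤ Lf * ‖X - Y‖ := by
    intro X Y
    have := hlip X Y
    rwa [frobNorm_eq, frobNorm_eq] at this
  have h1 := descent_bound' f f' Lf hdiff hgrad hlip' Vk Utk Uk1
  have h2 := descent_bound' f f' Lf hdiff hgrad hlip' Vk Utk Uk
  have h3 := hU Uk
  have h4 := descent_bound_right f f' Lf hdiff hgrad hlip' Uk1 Vtk Vk1
  have h5 := descent_bound_right f f' Lf hdiff hgrad hlip' Uk1 Vtk Vk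
  have h6 := hV Vk
  rw [← hτ1] at h1 h2
  rw [← hτ2] at h4 h5
  obtain ⟨h1a, h1b⟩ := abs_le.mp h1
  obtain ⟨h2a, h2b⟩ := abs_le.mp h2
  obtain ⟨h4a, h4b⟩ := abs_le.mp h4
  obtain ⟨h5a, h5b⟩ := abs_le.mp h5
  simp only [frobInner_sub_right] at h1b h2a h4b h5a
  simp only [frobInner_self_eq] at h3 h6 ⊢
  simp only [Phi, frobInner_self_eq]
  linarith [h1b, h2a, h3, h4b, h5a, h6]
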